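/- Let t_0 = 0 and let (t_k)_{k≥1} be positive reals satisfying t_{m+1} ≥ 1 + t_m for all m ≥ 0 (divergent type). Set x_k = 1 + t_{k-1}, y_k = t_k, and define A_ℓ(m) and B_ℓ(m) by the tridiagonal three-term recurrences (A_0(m)=1, A_1(m)=x_{m+1}, A_ℓ(m)=x_{m+ℓ}A_{ℓ-1}(m)−y_{m+ℓ-1}A_{ℓ-2}(m); B_0(m)=y_{m+1}, B_1(m)=x_{m+3}y_{m+1}−x_{m+1}y_{m+2}, B_ℓ(m)=x_{m+ℓ+2}B_{ℓ-1}(m)−y_{m+ℓ+1}B_{ℓ-2}(m)). Then A_ℓ(m) > 0 and B_ℓ(m) > 0 for all ℓ ≥ 0 and m ≥ 0. -/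
import Mathlib


/-- Divergent-type positivity: for `t 0 = 0`, `t k > 0` (k ≥ 1), and
`t (m+1) ≥ 1 + t m` for all `m ≥ 0`, with `x k = 1 + t (k-1)`, `y k = t k`,
all shifted tridiagonal determinants `A ℓ m` and `B ℓ m` (defined by their
three-term recurrences) are strictly positive. -/
theorem divergent_type_positive (t x y : ℕ → ℝ) (ht0 : t 0 = 0)
    (htpos : ∀ k, 1 ≤ k → 0 < t k)
    (hdiv : ∀ m, 1 + t m ≤ t (m + 1))
    (hx : ∀ k, x k = 1 + t (k - 1)) (hy : ∀ k, y k = t k)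
    (A B : ℕ → ℕ → ℝ)
    (hA0 : ∀ m, A 0 m = 1) (hA1 : ∀ m, A 1 m = x (m + 1))
    (hArec : ∀ ℓ m, A (ℓ + 2) m = x (m + ℓ + 2) * A (ℓ + 1) m - y (m + ℓ + 1) * A ℓ m)
    (hB0 : ∀ m, B 0 m = y (m + 1))
    (hB1 : ∀ m, B 1 m = x (m + 3) * y (m + 1) - x (m + 1) * y (m + 2))
    (hBrec : ∀ ℓ m, B (ℓ + 2) m = x (m + ℓ + 4) * B (ℓ + 1) m - y (m + ℓ + 3) * B ℓ m) :
    ∀ ℓ m : ℕ, 0 < A ℓ m ∧ 0 < B ℓ m := by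
  have htnn : ∀ k, 0 ≤ t k := by
    intro k
    cases k with
    | zero => simp [ht0]
    | succ n => exact (htpos (n + 1) (Nat.le_add_left 1 n)).le
  intro ℓ m
  have hAmono : ∀ l, 0 < A l m ∧ A l m ≤ A (l + 1) m := by
    intro l
    induction l with
    | zero =>
      constructor
      · rw [hA0]; norm_num
      · rw [hA0, hA1, hx]
        simp only [Nat.add_sub_cancel]
        linarith [htnn m]
    | succ n ih =>
      obtain ⟨h1, h2⟩ := ih
      have key : A (n + 2) m - A (n + 1) m = t (m + n + 1) * (A (n + 1) m - A n m) := by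
        rw [hArec, hx, hy]
        have : m + n + 2 - 1 = m + n + 1 := rfl
        rw [this]; ring
      have h3 : 0 ≤ t (m + n + 1) * (A (n + 1) m - A n m) :=
        mul_nonneg (htnn _) (by linarith)
      exact ⟨by linarith, by linarith⟩
  have hBmono : ∀ l, 0 < B l m ∧ B l m ≤ B (l + 1) m := by
    intro l
    induction l with
    | zero =>
      have hb0 : B 0 m = t (m + 1) := by rw [hB0, hy]
      constructor
      · rw [hb0]; exact htpos _ (Nat.le_add_left 1 m)
      · rw [hb0, hB1, hx, hx, hy, hy]
        have e1 : m + 3 - 1 = m + 2 := rfl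
        have e2 : m + 1 - 1 = m := rfl
        rw [e1, e2]
        have h1 := hdiv m
        have h2 := htnn (m + 2)
        nlinarith
    | succ n ih =>
      obtain ⟨h1, h2⟩ := ih
      have key : B (n + 2) m - B (n + 1) m = t (m + n + 3) * (B (n + 1) m - B n m) := by
        rw [hBrec, hx, hy]
        have : m + n + 4 - 1 = m + n + 3 := rfl
        rw [this]; ring
      have h3 : 0 ≤ t (m + n + 3) * (B (n + 1) m - B n m) :=
        mul_nonneg (htnn _) (by linarith)
      exact ⟨by linarith, by linarith⟩
  exact ⟨(hAmono ℓ).1, (hBmono ℓ).1⟩
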